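/- arXiv:1703.07698 — 3 statements merged into one kernel-verified Lean document; each statement's English description precedes it below -/
import Mathlib

section
/- Let d ≥ 2, fix j ∈ {1,…,d−1} and i ∈ {1,…,j}, let r0 = rd = 1 and r1,…,r_{d−1} be positive integers, let r'_i be a rational non-integer number with r'_i ≤ n/6, and let n, r, l be positive integers and ε ∈ (0,1) satisfying: n > max{400, Σ_{k=1}^{d−1} r_{k−1}·r_k}, r ≤ Σ_{k=1}^{d−1} r_{k−1}·r_k, and l > max{63·log(n/ε) + 9·log(2r/ε) + 18, 6·⌈r'_i⌉}. Consider n − ⌊r'_i⌋ columns of the j-th unfolding of a random sampling pattern: for each column, the set of observed positions is the image of l independent draws, each uniformly distributed over the column's n^j cells {1,…,n}^j, with draws independent across columns. Then with probability at least 1 − ε/r, for every nonempty proper subset T of these n − ⌊r'_i⌋ columns, the number of distinct values of the i-th coordinate appearing among the observed positions of the columns in T is at least |T| + ⌈r'_i⌉. -/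
open Finset Nat

lemma auxCardPiMem (J N : ℕ) (i0 : Fin J) (S : Finset (Fin N)) :
    Fintype.card {v : Fin J → Fin N // v i0 ∈ S} = S.card * N ^ (J - 1) := by
  classical
  have e : {v : Fin J → Fin N // v i0 ∈ S} ≃
      {x : Fin N // x ∈ S} × ({k : Fin J // k ≠ i0} → Fin N) :=
    ((Equiv.funSplitAt i0 (Fin N)).subtypeEquiv (fun v => Iff.rfl)).trans
      Equiv.prodSubtypeFstEquivSubtypeProd
  rw [Fintype.card_congr e, Fintype.card_prod, Fintype.card_fun]
  have h1 : Fintype.card {x : Fin N // x ∈ S} = S.card := Fintype.card_coe S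
  have h2 : Fintype.card {k : Fin J // k ≠ i0} = J - 1 := by
    simp [Fintype.card_subtype_compl, Fintype.card_subtype_eq]
  rw [h1, h2, Fintype.card_fin]

lemma auxCardEvent {V : Type} [Fintype V] [DecidableEq V] (P : V → Prop) [DecidablePred P]
    (m L : ℕ) (T : Finset (Fin m)) :
    Fintype.card {ω : Fin m → Fin L → V // ∀ c ∈ T, ∀ k, P (ω c k)} =
      (Fintype.card {v // P v}) ^ (L * T.card) * (Fintype.card V) ^ (L * (m - T.card)) := by
  classical
  have e1 : {ω : Fin m → Fin L → V // ∀ c ∈ T, ∀ k, P (ω c k)} ≃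
      {x : ({c : Fin m // c ∈ T} → Fin L → V) × ({c : Fin m // ¬ c ∈ T} → Fin L → V) //
        ∀ c : {c : Fin m // c ∈ T}, ∀ k, P (x.1 c k)} :=
    (Equiv.piEquivPiSubtypeProd (· ∈ T) (fun _ => Fin L → V)).subtypeEquiv
      (fun ω => by simp [Equiv.piEquivPiSubtypeProd, Subtype.forall])
  have e2 : {x : ({c : Fin m // c ∈ T} → Fin L → V) × ({c : Fin m // ¬ c ∈ T} → Fin L → V) //
        ∀ c : {c : Fin m // c ∈ T}, ∀ k, P (x.1 c k)} ≃
      {f : {c : Fin m // c ∈ T} → Fin L → V // ∀ c, ∀ k, P (f c k)} ×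
        ({c : Fin m // ¬ c ∈ T} → Fin L → V) :=
    Equiv.prodSubtypeFstEquivSubtypeProd (p := fun f : {c : Fin m // c ∈ T} → Fin L → V => ∀ c, ∀ k, P (f c k))
  have e3 : {f : {c : Fin m // c ∈ T} → Fin L → V // ∀ c, ∀ k, P (f c k)} ≃
      ∀ _c : {c : Fin m // c ∈ T}, (Fin L → {v : V // P v}) :=
    Equiv.subtypePiEquivPi.trans (Equiv.piCongrRight fun c => Equiv.subtypePiEquivPi)
  rw [Fintype.card_congr ((e1.trans e2).trans (Equiv.prodCongrLeft fun _ => e3))]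
  rw [Fintype.card_prod, Fintype.card_pi]
  simp only [Fintype.card_fun, Fintype.card_coe, Finset.prod_const]
  rw [Fintype.card_subtype_compl, Fintype.card_coe, Finset.card_univ, Fintype.card_coe,
    ← pow_mul, ← pow_mul]
  simp [Fintype.card_fin, Nat.mul_comm]

lemma auxChooseLePow (n k : ℕ) : n.choose k ≤ n ^ k :=
  calc n.choose k ≤ k ! * n.choose k := Nat.le_mul_of_pos_left _ k.factorial_pos
  _ = n.descFactorial k := (Nat.descFactorial_eq_factorial_mul_choose n k).symm
  _ ≤ n ^ k := Nat.descFactorial_le_pow n k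

lemma auxLogChoose (n s : ℕ) (hs : 1 ≤ s) (hsn : s ≤ n) :
    Real.log (n.choose s) ≤ s * (1 + Real.log n - Real.log s) := by
  have hs0 : (0:ℝ) < s := by exact_mod_cast hs
  have hn0 : (0:ℝ) < n := by exact_mod_cast hs.trans hsn
  have hfac : (0:ℝ) < (s ! : ℝ) := by exact_mod_cast s.factorial_pos
  have h1 : (n.choose s : ℝ) ≤ (n:ℝ)^s / s ! := Nat.choose_le_pow_div s n
  have h2 : (s:ℝ)^s / s ! ≤ Real.exp s := by
    refine le_trans ?_ (Real.sum_le_exp_of_nonneg (by positivity) (s+1))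
    exact Finset.single_le_sum (f := fun i => (s:ℝ)^i / i !) (fun i _ => by positivity)
      (Finset.self_mem_range_succ s)
  have h3 : (n.choose s : ℝ) ≤ (n:ℝ)^s * Real.exp s / (s:ℝ)^s := by
    have : (1:ℝ) / s ! ≤ Real.exp s / (s:ℝ)^s := by
      rw [div_le_div_iff₀ hfac (by positivity)]
      calc (1:ℝ) * (s:ℝ)^s = (s:ℝ)^s := by ring
      _ ≤ Real.exp s * s ! := (div_le_iff₀ hfac).mp h2
    calc (n.choose s : ℝ) ≤ (n:ℝ)^s / s ! := h1
    _ = (n:ℝ)^s * (1 / s !) := by ring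
    _ ≤ (n:ℝ)^s * (Real.exp s / (s:ℝ)^s) := by
        exact mul_le_mul_of_nonneg_left this (by positivity)
    _ = (n:ℝ)^s * Real.exp s / (s:ℝ)^s := by ring
  have hpos : (0:ℝ) < (n.choose s : ℝ) := by exact_mod_cast Nat.choose_pos hsn
  calc Real.log (n.choose s) ≤ Real.log ((n:ℝ)^s * Real.exp s / (s:ℝ)^s) :=
        Real.log_le_log hpos h3
  _ = s * Real.log n + s - s * Real.log s := by
      rw [Real.log_div (by positivity) (by positivity), Real.log_mul (by positivity)
        (Real.exp_ne_zero _), Real.log_pow, Real.log_pow, Real.log_exp]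
  _ = s * (1 + Real.log n - Real.log s) := by ring

lemma auxPowId (x s : ℝ) (hx : x ≠ 0) (j t u L : ℕ) :
    (s * x ^ j) ^ (L*t) * (x ^ (j+1)) ^ (L*u) = (s / x) ^ (L*t) * (x ^ (j+1)) ^ (L*(t+u)) := by
  have key : (s / x) ^ (L*t) * (x ^ (j+1)) ^ (L*t) = (s * x ^ j) ^ (L*t) := by
    rw [← mul_pow, pow_succ, div_mul_eq_mul_div, mul_div_assoc, mul_div_cancel_right₀ _ hx]
  rw [mul_add, pow_add (x ^ (j+1)), ← mul_assoc, key]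

set_option maxHeartbeats 1000000 in
lemma auxAnalytic (n F l r t mm : ℕ) (ε : ℝ)
    (hε0 : 0 < ε) (hε1 : ε < 1) (hr : 1 ≤ r) (hn : 400 < n)
    (hFn : 6 * F ≤ n) (hmm : mm + F = n)
    (hl6 : 6 * F + 7 ≤ l) (hlB : 63 * Real.log n + 9 * Real.log (2*r/ε) + 18 < l)
    (ht1 : 1 ≤ t) (ht2 : t ≤ mm - 1) :
    (mm.choose t : ℝ) * (n.choose (t+F) : ℝ) * (((t+F : ℕ) : ℝ)/(n:ℝ))^(l*t) ≤ ε / (2*r*n) := by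
  set Ln := Real.log n with hLn
  set B := Real.log (2*(r:ℝ)/ε) with hB
  set s := t + F with hs
  have hmm2 : 2 ≤ mm := by omega
  have htmm : t ≤ mm := by omega
  have hs1 : 1 ≤ s := by omega
  have hsn : s ≤ n - 1 := by omega
  have hsn' : s ≤ n := by omega
  have hn0 : (0:ℝ) < n := by exact_mod_cast (by omega : 0 < n)
  have hs0 : (0:ℝ) < s := by exact_mod_cast hs1
  have hr0 : (0:ℝ) < r := by exact_mod_cast hr
  have hl0nat : 1 ≤ l := by omega
  have hl0 : (0:ℝ) < l := by exact_mod_cast hl0nat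
  have ht0 : (0:ℝ) < t := by exact_mod_cast ht1
  have hLn0 : 0 ≤ Ln := Real.log_nonneg (by exact_mod_cast (by omega : 1 ≤ n))
  have hr1 : (1:ℝ) ≤ r := by exact_mod_cast hr
  have hB0 : 0 ≤ B := Real.log_nonneg (by
    rw [le_div_iff₀ hε0]
    linarith)
  have hc1 : (0:ℝ) < (mm.choose t : ℝ) := by exact_mod_cast Nat.choose_pos htmm
  have hc2 : (0:ℝ) < (n.choose s : ℝ) := by exact_mod_cast Nat.choose_pos hsn'
  have hLpos : (0:ℝ) < (mm.choose t : ℝ) * (n.choose s : ℝ) * ((s:ℝ)/(n:ℝ))^(l*t) := by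
    positivity
  have hRpos : (0:ℝ) < ε / (2*r*n) := by positivity
  have hRHSlog : Real.log (ε/(2*(r:ℝ)*n)) = -B - Ln := by
    rw [Real.log_div hε0.ne' (by positivity), Real.log_mul (by positivity) hn0.ne', hB,
      Real.log_div (by positivity) hε0.ne', hLn]
    ring
  refine (Real.log_le_log_iff hLpos hRpos).mp ?_
  rw [Real.log_mul (by positivity) (by positivity), Real.log_mul hc1.ne' hc2.ne',
    Real.log_pow, hRHSlog]
  -- common bound on first binomial (used in case A)
  have hmmn : mm ≤ n := by omega
  have hlogc1 : Real.log (mm.choose t) ≤ t * Ln := by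
    have h : (mm.choose t : ℝ) ≤ (n:ℝ)^t := by
      exact_mod_cast le_trans (auxChooseLePow mm t) (Nat.pow_le_pow_left hmmn t)
    calc Real.log (mm.choose t) ≤ Real.log ((n:ℝ)^t) := Real.log_le_log hc1 h
    _ = t * Ln := by rw [Real.log_pow, hLn]
  have hlt : (63*Ln + 9*B + 18 : ℝ) < l := hlB
  rcases le_or_gt (2*s) n with hcase | hcase
  · -- Case A : s ≤ n/2
    have hD : Real.log 2 ≤ Ln - Real.log s := by
      have h2s : (2:ℝ)*s ≤ n := by exact_mod_cast hcase
      have h := Real.log_le_log (by positivity : (0:ℝ) < 2*s) h2s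
      rw [Real.log_mul two_ne_zero hs0.ne'] at h
      rw [hLn]; linarith
    set D : ℝ := Ln - Real.log s with hDdef
    have hD3 : (0.6931471803:ℝ) ≤ D := le_trans Real.log_two_gt_d9.le hD
    have hD0 : (0:ℝ) ≤ D := by linarith
    have hlogc2 : Real.log (n.choose s) ≤ (s:ℝ) + (s:ℝ)*D := by
      have h := auxLogChoose n s hs1 hsn'
      have : (s:ℝ) * (1 + Real.log n - Real.log s) = (s:ℝ) + (s:ℝ)*D := by
        rw [hDdef, hLn]; ring
      linarith [this ▸ h]
    have hlogsn : Real.log ((s:ℝ)/n) = -D := by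
      rw [Real.log_div hs0.ne' hn0.ne', hDdef]; ring
    rw [hlogsn]
    have h6s : 6*s ≤ l*t := by
      have hFt : 6*F ≤ 6*(F*t) := Nat.mul_le_mul_left 6 (Nat.le_mul_of_pos_right F (by omega))
      calc 6*s = 6*t + 6*F := by omega
      _ ≤ (6*F+7)*t := by nlinarith [hFt]
      _ ≤ l*t := Nat.mul_le_mul_right t hl6
    have h6sR : 6*(s:ℝ) ≤ (l:ℝ)*t := by exact_mod_cast h6s
    set X : ℝ := (l:ℝ)*t with hX
    have hX0 : (0:ℝ) ≤ X := by positivity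
    have hsX : (s:ℝ) ≤ X/6 := by linarith
    have hsDX : (s:ℝ)*D ≤ X/6*D := mul_le_mul_of_nonneg_right hsX hD0
    have hXD : (5/6)*0.6931471803*X ≤ (5/6)*(X*D) := by nlinarith
    have hltX : 63*(Ln*(t:ℝ)) + 9*(B*(t:ℝ)) + 18*(t:ℝ) ≤ X := by
      have h := mul_le_mul_of_nonneg_right hlt.le ht0.le
      rw [hX]; nlinarith [h]
    have hLnt : Ln ≤ Ln * t := le_mul_of_one_le_right hLn0 (by exact_mod_cast ht1)
    have hBt : B ≤ B * t := le_mul_of_one_le_right hB0 (by exact_mod_cast ht1)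
    have hmul : ((l*t : ℕ) : ℝ) = X := by rw [hX]; push_cast; ring
    rw [hmul]
    -- goal : log c1 + log c2 + X * (-D) ≤ -B - Ln
    have hLnt' : Ln * t = t * Ln := by ring
    clear_value s Ln B D X
    linarith [hlogc1, hlogc2, hsDX, hXD, hltX, hLnt, hBt, hsX, hX0, hLnt'.le, hLnt'.ge]
  · -- Case B : s > n/2
    set u : ℕ := mm - t with hu
    have hu1 : 1 ≤ u := by omega
    have hun : s + u = n := by omega
    have hu0 : (0:ℝ) < u := by exact_mod_cast hu1
    have hc1eq : mm.choose t = mm.choose u := by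
      rw [hu]; exact (Nat.choose_symm htmm).symm
    have hc2eq : n.choose s = n.choose u := by
      have : u = n - s := by omega
      rw [this]; exact (Nat.choose_symm hsn').symm
    have hlogc1' : Real.log (mm.choose t) ≤ u * Ln := by
      have h : (mm.choose t : ℝ) ≤ (n:ℝ)^u := by
        rw [hc1eq]
        exact_mod_cast le_trans (auxChooseLePow mm u) (Nat.pow_le_pow_left hmmn u)
      calc Real.log (mm.choose t) ≤ Real.log ((n:ℝ)^u) := Real.log_le_log hc1 h
      _ = u * Ln := by rw [Real.log_pow, hLn]
    have hlogc2' : Real.log (n.choose s) ≤ u * Ln := by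
      have h : (n.choose s : ℝ) ≤ (n:ℝ)^u := by
        rw [hc2eq]; exact_mod_cast auxChooseLePow n u
      calc Real.log (n.choose s) ≤ Real.log ((n:ℝ)^u) := Real.log_le_log hc2 h
      _ = u * Ln := by rw [Real.log_pow, hLn]
    have hsun : (s:ℝ) + u = n := by exact_mod_cast hun
    have hlogsn : Real.log ((s:ℝ)/n) ≤ -(u:ℝ)/n := by
      have h := Real.log_le_sub_one_of_pos (by positivity : (0:ℝ) < (s:ℝ)/n)
      have heq : (s:ℝ)/n - 1 = -(u:ℝ)/n := by field_simp; linarith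
      rw [heq] at h; exact h
    have htn : (n:ℝ) < 3*t := by
      have h2s : (n:ℝ) < 2*s := by exact_mod_cast hcase
      have hFn' : 6*(F:ℝ) ≤ n := by exact_mod_cast hFn
      have hsF : (s:ℝ) = t + F := by push_cast [hs]; ring
      linarith
    have hmain : ((l:ℝ)*t) * Real.log ((s:ℝ)/n) ≤ -((l:ℝ)*u/3) := by
      have h1 : ((l:ℝ)*t) * Real.log ((s:ℝ)/n) ≤ ((l:ℝ)*t) * (-(u:ℝ)/n) :=
        mul_le_mul_of_nonneg_left hlogsn (by positivity)
      have h2 : (l:ℝ)*u/3 ≤ (l:ℝ)*t*u/n := by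
        rw [div_le_div_iff₀ (by norm_num) hn0]
        nlinarith [mul_nonneg (mul_nonneg hl0.le hu0.le)
          (by linarith [htn] : (0:ℝ) ≤ 3*(t:ℝ) - n)]
      have h3 : ((l:ℝ)*t) * (-(u:ℝ)/n) = -((l:ℝ)*t*u/n) := by ring
      rw [h3] at h1
      linarith
    have hmul : ((l*t : ℕ) : ℝ) = (l:ℝ)*t := by push_cast; ring
    rw [hmul]
    have hfinal : B + Ln ≤ (l:ℝ)/3 - 2*Ln := by linarith
    have hu1R : (1:ℝ) ≤ u := by exact_mod_cast hu1
    have hmono : (l:ℝ)/3 - 2*Ln ≤ u*((l:ℝ)/3 - 2*Ln) :=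
      le_mul_of_one_le_left (by linarith) hu1R
    have hexp : (u:ℝ)*((l:ℝ)/3 - 2*Ln) = (l:ℝ)*u/3 - 2*((u:ℝ)*Ln) := by ring
    rw [hexp] at hmono
    clear_value s Ln B u
    linarith [hlogc1', hlogc2', hmain, hmono, hfinal]


set_option maxHeartbeats 1600000 in
lemma auxMain (n F mm l j r : ℕ) (ε : ℝ) (i0 : Fin j) (cq : ℤ)
    (hcq : cq = (F:ℤ) + 1) (hj : 1 ≤ j)
    (hmm : mm + F = n) (hr : 1 ≤ r) (hn : 400 < n) (hFn : 6*F ≤ n) (hl6 : 6*F+7 ≤ l)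
    (hlB : 63*Real.log n + 9*Real.log (2*(r:ℝ)/ε) + 18 < l) (hε0 : 0 < ε) (hε1 : ε < 1) :
    1 - ε/r ≤
      (Nat.card {ω : Fin mm → Fin l → (Fin j → Fin n) //
          ∀ T : Finset (Fin mm), T.Nonempty → T ≠ Finset.univ →
            (T.card : ℤ) + cq ≤
              (((T.biUnion fun c => Finset.univ.image (ω c)).image
                (fun v => v i0)).card : ℤ)} : ℝ) /
        (Fintype.card (Fin mm → Fin l → (Fin j → Fin n)) : ℝ) := by
  classical
  have hl1 : 1 ≤ l := by omega
  have hmm2 : 2 ≤ mm := by omega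
  have hn0 : 0 < n := by omega
  have hn0R : (0:ℝ) < n := by exact_mod_cast hn0
  have hr0R : (0:ℝ) < r := by exact_mod_cast hr
  haveI : Nonempty (Fin n) := ⟨⟨0, hn0⟩⟩
  set P : (Fin mm → Fin l → (Fin j → Fin n)) → Prop := fun ω =>
    ∀ T : Finset (Fin mm), T.Nonempty → T ≠ Finset.univ →
      (T.card : ℤ) + cq ≤
        (((T.biUnion fun c => Finset.univ.image (ω c)).image (fun v => v i0)).card : ℤ)
    with hP
  have hNat : Nat.card {ω : Fin mm → Fin l → (Fin j → Fin n) // P ω} = (Finset.univ.filter P).card := by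
    rw [Nat.card_eq_fintype_card, Fintype.card_subtype]
  set Bad : Finset (Fin mm → Fin l → (Fin j → Fin n)) := Finset.univ.filter (fun ω => ¬ P ω) with hBad
  set Tot : ℕ := Fintype.card (Fin mm → Fin l → (Fin j → Fin n)) with hTotdef
  have hTotpos : 0 < Tot := Fintype.card_pos
  have hsplit : (Finset.univ.filter P).card + Bad.card = Tot := by
    rw [hBad, hTotdef, ← Finset.card_univ]
    exact Finset.card_filter_add_card_filter_not P
  have hTotval : Tot = ((n^j)^l)^mm := by
    rw [hTotdef]
    simp [Fintype.card_fun, Fintype.card_fin]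
  have hTotR : (Tot:ℝ) = ((n:ℝ)^j)^(l*mm) := by
    rw [hTotval]; push_cast; rw [pow_mul]
  set 𝒜 : Finset (Finset (Fin mm) × Finset (Fin n)) :=
    (Finset.univ.powerset ×ˢ Finset.univ.powerset).filter
      (fun p => p.1.Nonempty ∧ p.1 ≠ Finset.univ ∧ p.2.card = p.1.card + F) with hA
  set E : Finset (Fin mm) × Finset (Fin n) → Finset (Fin mm → Fin l → (Fin j → Fin n)) :=
    (fun p => Finset.univ.filter
      (fun ω : Fin mm → Fin l → (Fin j → Fin n) => ∀ c ∈ p.1, ∀ k, ω c k i0 ∈ p.2)) with hE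
  have hceilF : cq = (F:ℤ) + 1 := hcq
  have hsub : Bad ⊆ 𝒜.biUnion E := by
    clear_value Bad E 𝒜 Tot
    intro ω hω
    rw [hBad, Finset.mem_filter] at hω
    obtain ⟨-, hω⟩ := hω
    simp only [hP] at hω
    push_neg at hω
    obtain ⟨T, hT1, hT2, hT3⟩ := hω
    have hTm : T.card ≤ mm - 1 := by
      have h := Finset.card_lt_card (Finset.ssubset_univ_iff.mpr hT2)
      rw [Finset.card_univ, Fintype.card_fin] at h
      exact Nat.le_pred_of_lt h
    have hIcard : ((T.biUnion fun c => Finset.univ.image (ω c)).image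
        (fun v => v i0)).card ≤ T.card + F := by
      rw [hceilF] at hT3
      have h2 : ((((T.biUnion fun c => Finset.univ.image (ω c)).image
          (fun v => v i0)).card : ℕ) : ℤ) ≤ (T.card : ℤ) + (F : ℤ) := by linarith [hT3]
      exact_mod_cast h2
    obtain ⟨S, hS1, hS2, hS3⟩ := Finset.exists_subsuperset_card_eq
      (Finset.subset_univ ((T.biUnion fun c => Finset.univ.image (ω c)).image (fun v => v i0)))
      hIcard (by rw [Finset.card_univ, Fintype.card_fin]; clear hIcard hT3; omega)
    refine Finset.mem_biUnion.mpr ⟨(T, S), ?_, ?_⟩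
    · rw [hA, Finset.mem_filter, Finset.mem_product]
      exact ⟨⟨Finset.mem_powerset.mpr (Finset.subset_univ _),
        Finset.mem_powerset.mpr (Finset.subset_univ _)⟩, hT1, hT2, hS3⟩
    · rw [hE]
      simp only [Finset.mem_filter, Finset.mem_univ, true_and]
      intro c hc k
      refine hS1 ?_
      exact Finset.mem_image.mpr ⟨ω c k,
        Finset.mem_biUnion.mpr ⟨c, hc, Finset.mem_image_of_mem _ (Finset.mem_univ k)⟩, rfl⟩
  have hEcard : ∀ p ∈ 𝒜, (E p).card =
      ((p.1.card + F) * n^(j-1))^(l*p.1.card) * (n^j)^(l*(mm - p.1.card)) := by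
    intro p hp
    have hp2 : p.2.card = p.1.card + F := by
      simp only [hA, Finset.mem_filter] at hp
      exact hp.2.2.2
    calc (E p).card
        = Fintype.card {ω : Fin mm → Fin l → (Fin j → Fin n) //
            ∀ c ∈ p.1, ∀ k, (ω c k) i0 ∈ p.2} := by
          rw [hE]; exact (Fintype.card_subtype _).symm
      _ = (Fintype.card {v : Fin j → Fin n // v i0 ∈ p.2}) ^ (l * p.1.card) *
          (Fintype.card (Fin j → Fin n)) ^ (l * (mm - p.1.card)) :=
          auxCardEvent (fun v : Fin j → Fin n => v i0 ∈ p.2) mm l p.1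
      _ = ((p.1.card + F) * n^(j-1))^(l*p.1.card) * (n^j)^(l*(mm - p.1.card)) := by
          rw [auxCardPiMem, hp2, Fintype.card_fun, Fintype.card_fin, Fintype.card_fin]
  have hmaps : ∀ p ∈ 𝒜, p.1.card ∈ Finset.Icc 1 (mm - 1) := by
    intro p hp
    simp only [hA, Finset.mem_filter] at hp
    obtain ⟨-, h1, h2, -⟩ := hp
    rw [Finset.mem_Icc]
    refine ⟨h1.card_pos, ?_⟩
    have h := Finset.card_lt_card (Finset.ssubset_univ_iff.mpr h2)
    rw [Finset.card_univ, Fintype.card_fin] at h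
    omega
  set g : ℕ → ℕ := fun t => ((t + F) * n^(j-1))^(l*t) * (n^j)^(l*(mm-t)) with hg
  have hBadcard : Bad.card ≤ ∑ t ∈ Finset.Icc 1 (mm-1), mm.choose t * (n.choose (t+F) * g t) := by
    calc Bad.card ≤ (𝒜.biUnion E).card := Finset.card_le_card hsub
    _ ≤ ∑ p ∈ 𝒜, (E p).card := Finset.card_biUnion_le
    _ = ∑ p ∈ 𝒜, g p.1.card := Finset.sum_congr rfl (fun p hp => by rw [hEcard p hp])
    _ = ∑ t ∈ Finset.Icc 1 (mm-1), ∑ p ∈ 𝒜.filter (fun p => p.1.card = t), g p.1.card :=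
        (Finset.sum_fiberwise_of_maps_to hmaps _).symm
    _ ≤ ∑ t ∈ Finset.Icc 1 (mm-1), mm.choose t * (n.choose (t+F) * g t) := by
        refine Finset.sum_le_sum (fun t ht => ?_)
        have hsubt : 𝒜.filter (fun p => p.1.card = t) ⊆
            Finset.powersetCard t Finset.univ ×ˢ Finset.powersetCard (t+F) Finset.univ := by
          intro p hp
          simp only [hA, Finset.mem_filter, Finset.mem_product, Finset.mem_powersetCard] at hp ⊢
          obtain ⟨⟨-, -, -, h3⟩, h4⟩ := hp
          exact ⟨⟨Finset.subset_univ _, h4⟩, Finset.subset_univ _, by omega⟩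
        calc ∑ p ∈ 𝒜.filter (fun p => p.1.card = t), g p.1.card
            = ∑ p ∈ 𝒜.filter (fun p => p.1.card = t), g t := by
              refine Finset.sum_congr rfl (fun p hp => ?_)
              rw [Finset.mem_filter] at hp
              rw [hp.2]
          _ = (𝒜.filter (fun p => p.1.card = t)).card * g t := by
              rw [Finset.sum_const, smul_eq_mul]
          _ ≤ (mm.choose t * n.choose (t+F)) * g t := by
              refine Nat.mul_le_mul_right _ ?_
              calc (𝒜.filter (fun p => p.1.card = t)).card
                  ≤ (Finset.powersetCard t (Finset.univ : Finset (Fin mm)) ×ˢ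
                     Finset.powersetCard (t+F) (Finset.univ : Finset (Fin n))).card :=
                    Finset.card_le_card hsubt
                _ = mm.choose t * n.choose (t+F) := by
                    rw [Finset.card_product, Finset.card_powersetCard, Finset.card_powersetCard,
                      Finset.card_univ, Finset.card_univ, Fintype.card_fin, Fintype.card_fin]
          _ = mm.choose t * (n.choose (t+F) * g t) := by ring
  have hterm : ∀ t ∈ Finset.Icc 1 (mm-1),
      (mm.choose t : ℝ) * ((n.choose (t+F) : ℝ) * (g t : ℝ)) ≤
        ε/(2*r*n) * ((n:ℝ)^j)^(l*mm) := by
    intro t ht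
    rw [Finset.mem_Icc] at ht
    obtain ⟨ht1, ht2⟩ := ht
    have htmm : t ≤ mm := by omega
    have hgR : (g t : ℝ) = (((t:ℝ)+(F:ℝ))/(n:ℝ))^(l*t) * ((n:ℝ)^j)^(l*mm) := by
      have hid := auxPowId (n:ℝ) ((t:ℝ)+(F:ℝ)) hn0R.ne' (j-1) t (mm-t) l
      rw [show j - 1 + 1 = j by omega, show t + (mm - t) = mm by omega] at hid
      rw [hg]
      push_cast
      exact hid
    have hAn := auxAnalytic n F l r t mm ε hε0 hε1 hr hn hFn hmm hl6 hlB ht1 ht2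
    push_cast at hAn
    rw [hgR]
    calc (mm.choose t:ℝ) * ((n.choose (t+F):ℝ) *
          ((((t:ℝ)+(F:ℝ))/n)^(l*t) * ((n:ℝ)^j)^(l*mm)))
        = ((mm.choose t:ℝ) * (n.choose (t+F):ℝ) * (((t:ℝ)+(F:ℝ))/n)^(l*t)) *
            ((n:ℝ)^j)^(l*mm) := by ring
      _ ≤ ε/(2*r*n) * ((n:ℝ)^j)^(l*mm) := by
          refine mul_le_mul_of_nonneg_right ?_ (by positivity)
          convert hAn using 3
  have hkey : (Bad.card : ℝ) ≤ ε / r * Tot := by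
    calc (Bad.card:ℝ)
        ≤ ((∑ t ∈ Finset.Icc 1 (mm-1), mm.choose t * (n.choose (t+F) * g t) : ℕ) : ℝ) := by
          exact_mod_cast hBadcard
      _ = ∑ t ∈ Finset.Icc 1 (mm-1), (mm.choose t : ℝ) * ((n.choose (t+F) : ℝ) * (g t : ℝ)) := by
          push_cast; rfl
      _ ≤ (Finset.Icc 1 (mm-1)).card • (ε/(2*r*n) * ((n:ℝ)^j)^(l*mm)) :=
          Finset.sum_le_card_nsmul _ _ _ hterm
      _ = ((mm - 1 : ℕ):ℝ) * (ε/(2*r*n) * ((n:ℝ)^j)^(l*mm)) := by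
          have hmm1 : mm - 1 + 1 - 1 = mm - 1 := by omega
          rw [Nat.card_Icc, nsmul_eq_mul, hmm1]
      _ ≤ ε / r * Tot := by
          rw [hTotR]
          have h1 : ((mm-1:ℕ):ℝ) ≤ n := by exact_mod_cast (by omega : mm - 1 ≤ n)
          have h2 : (0:ℝ) ≤ ((n:ℝ)^j)^(l*mm) := by positivity
          have h4 : (n:ℝ) * (ε/(2*r*n)) = ε/(2*r) := by field_simp
          have h5 : ε/(2*r) ≤ ε/r := by
            apply div_le_div_of_nonneg_left hε0.le hr0R
            linarith
          have h3 : ((mm-1:ℕ):ℝ) * (ε/(2*r*n)) ≤ ε/r := by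
            have h6 : ((mm-1:ℕ):ℝ) * (ε/(2*r*n)) ≤ (n:ℝ) * (ε/(2*r*n)) :=
              mul_le_mul_of_nonneg_right h1 (by positivity)
            rw [h4] at h6
            linarith
          calc ((mm - 1 : ℕ):ℝ) * (ε/(2*r*n) * ((n:ℝ)^j)^(l*mm))
              = (((mm - 1 : ℕ):ℝ) * (ε/(2*r*n))) * ((n:ℝ)^j)^(l*mm) := by ring
            _ ≤ (ε/r) * ((n:ℝ)^j)^(l*mm) := mul_le_mul_of_nonneg_right h3 h2
  rw [hNat]
  have hTotposR : (0:ℝ) < (Tot:ℝ) := by exact_mod_cast hTotpos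
  have hfil : ((Finset.univ.filter P).card : ℝ) = (Tot:ℝ) - (Bad.card:ℝ) := by
    have h := hsplit
    have h2 : ((Finset.univ.filter P).card : ℝ) + (Bad.card:ℝ) = (Tot:ℝ) := by
      exact_mod_cast congrArg (fun x : ℕ => (x:ℝ)) h
    linarith
  rw [hfil, le_div_iff₀ hTotposR]
  nlinarith [hkey, hTotposR]

/-- Lemma 18: for a fixed `j ∈ {1,…,d−1}` and `i ∈ {1,…,j}`, let `q = r'ᵢ` be a positive
rational non-integer with `q ≤ n/6`. Consider `n − ⌊q⌋` columns of the `j`-th unfolding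
of a random sampling pattern (observed positions of each column being the image of
`l` i.i.d. draws uniform on its `n^j` cells, independently across columns, modelled by
the uniform counting probability on the outcome space). Under the stated conditions,
with probability at least `1 − ε/r` every nonempty proper subfamily `T` of columns sees
at least `|T| + ⌈q⌉` distinct values of the `i`-th coordinate. -/
theorem stmt14 (d j i : ℕ) (hd : 2 ≤ d) (hj1 : 1 ≤ j) (hjd : j ≤ d - 1)
    (hi1 : 1 ≤ i) (hij : i ≤ j)
    (rk : ℕ → ℕ) (hrk0 : rk 0 = 1) (hrkd : rk d = 1)
    (hrkpos : ∀ k, k ≤ d → 0 < rk k)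
    (q : ℚ) (hq0 : 0 < q) (hqnotint : ¬ ∃ z : ℤ, (z : ℚ) = q)
    (n r l : ℕ) (hn0 : 0 < n) (hr0 : 0 < r) (hl0 : 0 < l)
    (ε : ℝ) (hε0 : 0 < ε) (hε1 : ε < 1)
    (hqn : (q : ℝ) ≤ (n : ℝ) / 6)
    (hnbig : max 400 (∑ k ∈ Finset.Icc 1 (d - 1), rk (k - 1) * rk k) < n)
    (hrS : r ≤ ∑ k ∈ Finset.Icc 1 (d - 1), rk (k - 1) * rk k)
    (hlb : (l : ℝ) >
      max (63 * Real.log (n / ε) + 9 * Real.log (2 * r / ε) + 18) (6 * (⌈q⌉ : ℝ))) :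
    1 - ε / r ≤
      (Nat.card {ω : Fin (n - (⌊q⌋).toNat) → Fin l → (Fin j → Fin n) //
          ∀ T : Finset (Fin (n - (⌊q⌋).toNat)), T.Nonempty → T ≠ Finset.univ →
            (T.card : ℤ) + ⌈q⌉ ≤
              (((T.biUnion fun c => Finset.univ.image (ω c)).image
                (fun v => v ⟨i - 1, by omega⟩)).card : ℤ)} : ℝ) /
        (Fintype.card (Fin (n - (⌊q⌋).toNat) → Fin l → (Fin j → Fin n)) : ℝ) := by
  have hfloor0 : 0 ≤ ⌊q⌋ := Int.floor_nonneg.mpr hq0.le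
  set F : ℕ := (⌊q⌋).toNat with hFdef
  have hFint : (F:ℤ) = ⌊q⌋ := Int.toNat_of_nonneg hfloor0
  have hceil : ⌈q⌉ = (F:ℤ) + 1 := by
    have h1 : ⌈q⌉ ≤ ⌊q⌋ + 1 := Int.ceil_le_floor_add_one q
    have h2 : (⌊q⌋:ℚ) < q := lt_of_le_of_ne (Int.floor_le q) (fun h => hqnotint ⟨⌊q⌋, h⟩)
    have h4 : ((⌊q⌋:ℤ):ℚ) < ((⌈q⌉:ℤ):ℚ) := lt_of_lt_of_le h2 (Int.le_ceil q)
    have h3 : ⌊q⌋ < ⌈q⌉ := by exact_mod_cast h4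
    omega
  have hn400 : 400 < n := lt_of_le_of_lt (le_max_left _ _) hnbig
  have hn0R : (0:ℝ) < n := by exact_mod_cast hn0
  have hFq : (F:ℝ) ≤ (n:ℝ)/6 := by
    have ha : ((F:ℤ):ℚ) ≤ q := by rw [hFint]; exact Int.floor_le q
    have hb : (((F:ℤ):ℚ):ℝ) ≤ (q:ℝ) := by exact_mod_cast ha
    push_cast at hb
    linarith
  have hFn : 6*F ≤ n := by
    have : (6*F:ℝ) ≤ n := by push_cast; linarith
    exact_mod_cast this
  have hl6 : 6*F + 7 ≤ l := by
    have h1 : 6 * ((⌈q⌉:ℤ):ℝ) < l := lt_of_le_of_lt (le_max_right _ _) hlb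
    rw [hceil] at h1
    push_cast at h1
    have h2 : 6*F + 6 < l := by
      have h3 : ((6*F + 6 : ℕ):ℝ) < (l:ℝ) := by push_cast; linarith
      exact_mod_cast h3
    omega
  have hlB : 63*Real.log n + 9*Real.log (2*(r:ℝ)/ε) + 18 < l := by
    have h1 : 63 * Real.log (n/ε) + 9 * Real.log (2*r/ε) + 18 < l :=
      lt_of_le_of_lt (le_max_left _ _) hlb
    have h2 : Real.log n ≤ Real.log (n/ε) := by
      apply Real.log_le_log hn0R
      rw [le_div_iff₀ hε0]
      nlinarith
    linarith
  exact auxMain n F (n - F) l j r ε ⟨i - 1, by omega⟩ ⌈q⌉ hceil hj1 (by omega) hr0 hn400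
    hFn hl6 hlB hε0 hε1
end

section
/- Let n, ℓ, m be positive integers with 1 ≤ ℓ ≤ n and m ≥ 3ℓ, and let Y_1,…,Y_m be independent random variables, each uniformly distributed on {1,…,n}. Then the probability that the set {Y_1,…,Y_m} has at most ℓ distinct elements is at most C(n,ℓ)·(ℓ/n)^m, which in turn is at most (e^{1/2}·ℓ/n)^{2ℓ}, where C(n,ℓ) is the binomial coefficient. -/
/-- The union-bound estimate from the proof of Lemma 9: for `m ≥ 3ℓ` i.i.d. draws,
each uniform on `{1,…,n}` (modelled by the uniform counting probability on the space
`Fin m → Fin n` of outcomes), the probability that at most `ℓ` distinct values occur is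
at most `C(n,ℓ)·(ℓ/n)^m`, which is at most `(e^{1/2}·ℓ/n)^{2ℓ}`. -/
theorem stmt17 (n ℓ m : ℕ) (hn : 0 < n) (hℓ1 : 1 ≤ ℓ) (hℓn : ℓ ≤ n)
    (hm0 : 0 < m) (hm : 3 * ℓ ≤ m) :
    (Nat.card {ω : Fin m → Fin n //
        ((Finset.univ : Finset (Fin m)).image ω).card ≤ ℓ} : ℝ) /
        (Fintype.card (Fin m → Fin n) : ℝ)
      ≤ (n.choose ℓ : ℝ) * ((ℓ : ℝ) / n) ^ m ∧
    (n.choose ℓ : ℝ) * ((ℓ : ℝ) / n) ^ m ≤ (Real.exp (1 / 2) * ℓ / n) ^ (2 * ℓ) := by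
  have hn' : (0 : ℝ) < n := by exact_mod_cast hn
  have hℓ' : (0 : ℝ) < ℓ := by exact_mod_cast hℓ1
  constructor
  · -- counting bound
    have hcard : Nat.card {ω : Fin m → Fin n //
        ((Finset.univ : Finset (Fin m)).image ω).card ≤ ℓ} ≤ n.choose ℓ * ℓ ^ m := by
      rw [Nat.card_eq_fintype_card, Fintype.card_subtype]
      have hsub : (Finset.univ.filter fun ω : Fin m → Fin n =>
          ((Finset.univ : Finset (Fin m)).image ω).card ≤ ℓ) ⊆
          (Finset.univ.powersetCard ℓ).biUnion
            (fun S => Fintype.piFinset fun _ : Fin m => S) := by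
        intro ω hω
        simp only [Finset.mem_filter, Finset.mem_univ, true_and] at hω
        obtain ⟨S, hS1, hS2⟩ := Finset.exists_superset_card_eq hω
          (by simpa [Finset.card_univ] using hℓn)
        simp only [Finset.mem_biUnion, Finset.mem_powersetCard, Fintype.mem_piFinset]
        exact ⟨S, ⟨Finset.subset_univ S, hS2⟩, fun i => hS1 (Finset.mem_image_of_mem ω
          (Finset.mem_univ i))⟩
      calc _ ≤ ((Finset.univ.powersetCard ℓ).biUnion
            (fun S => Fintype.piFinset fun _ : Fin m => S)).card := Finset.card_le_card hsub
        _ ≤ ∑ S ∈ Finset.univ.powersetCard ℓ,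
            (Fintype.piFinset fun _ : Fin m => S).card := Finset.card_biUnion_le
        _ ≤ ∑ S ∈ Finset.univ.powersetCard ℓ, ℓ ^ m := by
            refine Finset.sum_le_sum fun S hS => ?_
            rw [Finset.mem_powersetCard] at hS
            rw [Fintype.card_piFinset]
            simp [hS.2]
        _ = n.choose ℓ * ℓ ^ m := by
            rw [Finset.sum_const, Finset.card_powersetCard, Finset.card_univ, Fintype.card_fin,
              smul_eq_mul]
    have hden : (Fintype.card (Fin m → Fin n) : ℝ) = (n : ℝ) ^ m := by
      simp [Fintype.card_fun]
    rw [hden, div_le_iff₀ (by positivity)]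
    calc (Nat.card {ω : Fin m → Fin n //
        ((Finset.univ : Finset (Fin m)).image ω).card ≤ ℓ} : ℝ)
        ≤ (n.choose ℓ : ℝ) * (ℓ : ℝ) ^ m := by exact_mod_cast hcard
      _ = (n.choose ℓ : ℝ) * ((ℓ : ℝ) / n) ^ m * (n : ℝ) ^ m := by
          rw [div_pow, mul_assoc, div_mul_cancel₀ _ (by positivity)]
  · -- analytic bound
    have hratio : (0 : ℝ) < (ℓ : ℝ) / n := by positivity
    have hratio1 : (ℓ : ℝ) / n ≤ 1 := by
      rw [div_le_one hn']; exact_mod_cast hℓn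
    have h1 : ((ℓ : ℝ) / n) ^ m ≤ ((ℓ : ℝ) / n) ^ (3 * ℓ) :=
      pow_le_pow_of_le_one hratio.le hratio1 hm
    have hchoose : (n.choose ℓ : ℝ) ≤ (Real.exp 1 * n / ℓ) ^ ℓ := by
      have h2 : (n.choose ℓ : ℝ) * (ℓ.factorial : ℝ) ≤ (n : ℝ) ^ ℓ := by
        have h := Nat.descFactorial_le_pow n ℓ
        rw [Nat.descFactorial_eq_factorial_mul_choose] at h
        rw [mul_comm]
        exact_mod_cast h
      have h3 : (ℓ : ℝ) ^ ℓ / (ℓ.factorial : ℝ) ≤ Real.exp ℓ :=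
        Real.pow_div_factorial_le_exp (x := (ℓ:ℝ)) (by positivity) ℓ
      have hfac : (0 : ℝ) < (ℓ.factorial : ℝ) := by exact_mod_cast ℓ.factorial_pos
      have h4 : (n.choose ℓ : ℝ) ≤ (n : ℝ) ^ ℓ / (ℓ.factorial : ℝ) := by
        rw [le_div_iff₀ hfac]; exact h2
      have h5 : (ℓ.factorial : ℝ) ≥ (ℓ : ℝ) ^ ℓ / Real.exp ℓ := by
        rw [ge_iff_le, div_le_iff₀ (Real.exp_pos _)]
        rw [div_le_iff₀ hfac] at h3; linarith
      calc (n.choose ℓ : ℝ) ≤ (n : ℝ) ^ ℓ / (ℓ.factorial : ℝ) := h4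
        _ ≤ (n : ℝ) ^ ℓ / ((ℓ : ℝ) ^ ℓ / Real.exp ℓ) := by
            apply div_le_div_of_nonneg_left (by positivity) (by positivity) h5
        _ = (Real.exp 1 * n / ℓ) ^ ℓ := by
            rw [div_pow, mul_pow, ← Real.exp_nat_mul, mul_one]
            field_simp
    have hrhs : (Real.exp (1 / 2) * ℓ / n) ^ (2 * ℓ) =
        Real.exp ℓ * ((ℓ : ℝ) / n) ^ (2 * ℓ) := by
      rw [mul_div_assoc, mul_pow, ← Real.exp_nat_mul]
      congr 1
      push_cast
      ring
    rw [hrhs]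
    calc (n.choose ℓ : ℝ) * ((ℓ : ℝ) / n) ^ m
        ≤ (n.choose ℓ : ℝ) * ((ℓ : ℝ) / n) ^ (3 * ℓ) := by
          apply mul_le_mul_of_nonneg_left h1 (by positivity)
      _ ≤ (Real.exp 1 * n / ℓ) ^ ℓ * ((ℓ : ℝ) / n) ^ (3 * ℓ) := by
          apply mul_le_mul_of_nonneg_right hchoose (by positivity)
      _ = Real.exp ℓ * ((ℓ : ℝ) / n) ^ (2 * ℓ) := by
          rw [show 3 * ℓ = ℓ + 2 * ℓ by ring, pow_add, div_pow, div_pow, mul_pow,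
            ← Real.exp_nat_mul, mul_one]
          field_simp
end

section
/- Let d ≥ 2, let n1,…,nd be positive integers, and let r0 = rd = 1 and r1,…,r_{d−1} be positive integers. Consider the multivariate polynomial ring over ℝ in the variables u^{(i)}_{k,x,k'} indexed by i ∈ {1,…,d}, k ∈ {1,…,r_{i−1}}, x ∈ {1,…,n_i}, k' ∈ {1,…,r_i}. For each multi-index x = (x1,…,xd) with x_i ∈ {1,…,n_i}, define the polynomial p_x := Σ_{k1=1}^{r1} ⋯ Σ_{k_{d−1}=1}^{r_{d−1}} ∏_{i=1}^{d} u^{(i)}_{k_{i−1}, x_i, k_i} (with k0 = kd = 1). Let S be a finite set of multi-indices. If the family (p_x)_{x ∈ S} is algebraically independent over ℝ, then |S| ≤ Σ_{i=1}^{d} r_{i−1}·r_i·m_i(S), where m_i(S) := |{x_i : x ∈ S}| is the number of distinct values of the i-th coordinate appearing in S. -/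
open MvPolynomial

lemma aux_card_le {ι σ : Type*} [Fintype ι] [Fintype σ]
    (f : ι → MvPolynomial σ ℝ) (h : AlgebraicIndependent ℝ f) :
    Fintype.card ι ≤ Fintype.card σ := by
  classical
  by_contra hlt
  push_neg at hlt
  set s := Fintype.card ι with hs
  set t := Fintype.card σ with ht
  set D := 1 + Finset.univ.sup (fun i => (f i).totalDegree) with hDdef
  have hfD : ∀ i, (f i).totalDegree ≤ D := by
    intro i
    rw [hDdef]
    exact le_trans (Finset.le_sup (f := fun i => (f i).totalDegree) (Finset.mem_univ i))
      (Nat.le_add_left _ 1)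
  set M := (D * s + 1) ^ t with hMdef
  set K := D * s * M with hKdef
  -- the injection from exponent functions to finsupps
  have hinj : Function.Injective (MvPolynomial.aeval f :
      MvPolynomial ι ℝ →ₐ[ℝ] MvPolynomial σ ℝ) :=
    algebraicIndependent_iff_injective_aeval.mp h
  set e : (ι → Fin (M + 1)) → (ι →₀ ℕ) :=
    fun k => Finsupp.equivFunOnFinite.symm (fun i => (k i : ℕ)) with he
  have heinj : Function.Injective e := by
    intro a b hab
    funext i
    have := congrArg (fun g => (g : ι →₀ ℕ) i) hab
    simp only [e, Finsupp.equivFunOnFinite_symm_apply_apply] at this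
    exact Fin.ext this
  -- linear independence of the monomial family
  have hmono : LinearIndependent ℝ
      (fun k : ι → Fin (M + 1) => (monomial (e k) (1 : ℝ) : MvPolynomial ι ℝ)) := by
    have := (basisMonomials ι ℝ).linearIndependent
    have h2 := this.comp e heinj
    exact h2
  have hF : LinearIndependent ℝ
      (fun k : ι → Fin (M + 1) => (MvPolynomial.aeval f (monomial (e k) (1 : ℝ)))) := by
    exact hmono.map' (MvPolynomial.aeval f).toLinearMap
      (LinearMap.ker_eq_bot.mpr hinj)
  -- membership in restrictTotalDegree
  have hmem : ∀ k : ι → Fin (M + 1),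
      MvPolynomial.aeval f (monomial (e k) (1 : ℝ)) ∈ restrictTotalDegree σ ℝ K := by
    intro k
    rw [mem_restrictTotalDegree]
    rw [aeval_monomial]
    have h1 : ((e k).prod fun i n => f i ^ n).totalDegree ≤ K := by
      refine le_trans (totalDegree_finset_prod _ _) ?_
      calc ∑ i ∈ (e k).support, (f i ^ (e k) i).totalDegree
          ≤ ∑ i ∈ (e k).support, M * D := by
            refine Finset.sum_le_sum fun i _ => ?_
            refine le_trans (totalDegree_pow _ _) ?_
            have h3 : (e k) i ≤ M := by
              simp only [e, Finsupp.equivFunOnFinite_symm_apply_apply]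
              exact Nat.lt_succ_iff.mp (k i).isLt
            exact Nat.mul_le_mul h3 (hfD i)
        _ ≤ s * (M * D) := by
            rw [Finset.sum_const, smul_eq_mul]
            exact Nat.mul_le_mul_right _ (le_trans (Finset.card_le_univ _) le_rfl)
        _ = K := by rw [hKdef]; ring
    calc (algebraMap ℝ (MvPolynomial σ ℝ) 1 * (e k).prod fun i n => f i ^ n).totalDegree
        = ((e k).prod fun i n => f i ^ n).totalDegree := by rw [map_one, one_mul]
      _ ≤ K := h1
  -- move into the submodule
  set F : (ι → Fin (M + 1)) → restrictTotalDegree σ ℝ K :=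
    fun k => ⟨MvPolynomial.aeval f (monomial (e k) (1 : ℝ)), hmem k⟩ with hFdef
  have hFli : LinearIndependent ℝ F := by
    apply LinearIndependent.of_comp (restrictTotalDegree σ ℝ K).subtype
    exact hF
  have hcard1 : (M + 1) ^ s ≤ Module.finrank ℝ (restrictTotalDegree σ ℝ K) := by
    have := hFli.fintype_card_le_finrank
    simpa [Fintype.card_fun] using this
  -- bound the finrank
  have hcomp : ∀ n : σ →₀ ℕ, (n.sum fun _ e => e) ≤ K → ∀ i, n i ≤ K := by
    intro n hn i
    refine le_trans ?_ hn
    by_cases h0 : n i = 0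
    · simp [h0]
    · rw [Finsupp.sum]
      exact Finset.single_le_sum (f := fun j => n j) (fun _ _ => Nat.zero_le _)
        (Finsupp.mem_support_iff.mpr h0)
  set Sset := {n : σ →₀ ℕ | (n.sum fun _ e => e) ≤ K} with hSset
  set g : Sset → (σ → Fin (K + 1)) :=
    fun n i => ⟨n.1 i, Nat.lt_succ_of_le (hcomp n.1 n.2 i)⟩ with hg
  have hginj : Function.Injective g := by
    intro a b hab
    apply Subtype.ext
    apply Finsupp.ext
    intro i
    have := congrFun hab i
    exact congrArg Fin.val this
  have : Finite Sset := Finite.of_injective g hginj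
  have : Fintype Sset := Fintype.ofFinite _
  have hrank : Module.finrank ℝ (restrictTotalDegree σ ℝ K) = Fintype.card Sset :=
    Module.finrank_eq_card_basis (basisRestrictSupport ℝ Sset)
  have hcard2 : Fintype.card Sset ≤ (K + 1) ^ t := by
    have := Fintype.card_le_of_injective g hginj
    simpa [Fintype.card_fun, ht] using this
  have hA : (M + 1) ^ s ≤ (K + 1) ^ t := by
    calc (M + 1) ^ s ≤ Module.finrank ℝ (restrictTotalDegree σ ℝ K) := hcard1
      _ = Fintype.card Sset := hrank
      _ ≤ (K + 1) ^ t := hcard2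
  -- arithmetic contradiction
  have h1 : K + 1 ≤ (D * s + 1) * (M + 1) := by
    calc K + 1 = D * s * M + 1 := by rw [hKdef]
      _ ≤ D * s * M + (D * s + M) + 1 := by omega
      _ = (D * s + 1) * (M + 1) := by ring
  have h2 : (K + 1) ^ t ≤ ((D * s + 1) * (M + 1)) ^ t := Nat.pow_le_pow_left h1 t
  have h3 : ((D * s + 1) * (M + 1)) ^ t = M * (M + 1) ^ t := by
    rw [mul_pow, hMdef]
  have h4 : M * (M + 1) ^ t < (M + 1) * (M + 1) ^ t :=
    Nat.mul_lt_mul_of_pos_right (Nat.lt_succ_self M) (Nat.pow_pos (n := t) (Nat.succ_pos M))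
  have h5 : (M + 1) * (M + 1) ^ t = (M + 1) ^ (t + 1) := by ring
  have h6 : (M + 1) ^ (t + 1) ≤ (M + 1) ^ s :=
    Nat.pow_le_pow_right (Nat.succ_le_succ (Nat.zero_le M)) hlt
  omega

/-- The variable-counting core of Lemma 5: in the polynomial ring over `ℝ` with variables
`u^{(i)}_{k,x,k'}` (indexed by the sigma type `(i : Fin d) × (Fin (r i) × Fin (n (i+1)) ×
Fin (r (i+1)))`, with `r 0 = r d = 1`), associate to each multi-index `x` the polynomial
`p x = Σ_{k} ∏_{t} u^{(t)}_{k_t, x_t, k_{t+1}}` of the TT decomposition. If the family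
`(p x)_{x ∈ S}` is algebraically independent over `ℝ`, then
`|S| ≤ Σ_{i} r_{i−1}·r_i·m_i(S)`, where `m_i(S)` is the number of distinct values of the
`i`-th coordinate appearing in `S`. -/
theorem stmt19 (d : ℕ) (hd : 2 ≤ d) (n r : ℕ → ℕ)
    (hn : ∀ i, 1 ≤ i → i ≤ d → 0 < n i)
    (hrpos : ∀ i, i ≤ d → 0 < r i) (hr0 : r 0 = 1) (hrd : r d = 1)
    (S : Finset ((t : Fin d) → Fin (n ((t : ℕ) + 1))))
    (hind : AlgebraicIndependent ℝ (fun x : {y // y ∈ S} =>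
      ∑ k : (t : Fin (d + 1)) → Fin (r (t : ℕ)), ∏ t : Fin d,
        (MvPolynomial.X
          ⟨t, (k ⟨(t : ℕ), Nat.lt_succ_of_lt t.isLt⟩, x.1 t,
            k ⟨(t : ℕ) + 1, Nat.succ_lt_succ t.isLt⟩)⟩ :
          MvPolynomial
            ((i : Fin d) × (Fin (r (i : ℕ)) × Fin (n ((i : ℕ) + 1)) ×
              Fin (r ((i : ℕ) + 1)))) ℝ))) :
    S.card ≤ ∑ i : Fin d,
      r (i : ℕ) * r ((i : ℕ) + 1) * (S.image (fun x => x i)).card := by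
  classical
  set T := (i : Fin d) × (Fin (r (i : ℕ)) ×
      {v : Fin (n ((i : ℕ) + 1)) // v ∈ S.image (fun x => x i)} ×
      Fin (r ((i : ℕ) + 1))) with hT
  set ρ : T → ((i : Fin d) × (Fin (r (i : ℕ)) × Fin (n ((i : ℕ) + 1)) ×
      Fin (r ((i : ℕ) + 1)))) := fun v => ⟨v.1, (v.2.1, v.2.2.1.1, v.2.2.2)⟩ with hρ
  set q : {y // y ∈ S} → MvPolynomial T ℝ := fun x =>
    ∑ k : (t : Fin (d + 1)) → Fin (r (t : ℕ)), ∏ t : Fin d,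
      MvPolynomial.X ⟨t, (k ⟨(t : ℕ), Nat.lt_succ_of_lt t.isLt⟩,
        ⟨x.1 t, Finset.mem_image_of_mem (fun y => y t) x.2⟩,
        k ⟨(t : ℕ) + 1, Nat.succ_lt_succ t.isLt⟩)⟩ with hqdef
  have hq : AlgebraicIndependent ℝ q := by
    apply AlgebraicIndependent.of_comp (MvPolynomial.rename ρ)
    have heq : (⇑(MvPolynomial.rename ρ) ∘ q) = (fun x : {y // y ∈ S} =>
      ∑ k : (t : Fin (d + 1)) → Fin (r (t : ℕ)), ∏ t : Fin d,
        (MvPolynomial.X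
          ⟨t, (k ⟨(t : ℕ), Nat.lt_succ_of_lt t.isLt⟩, x.1 t,
            k ⟨(t : ℕ) + 1, Nat.succ_lt_succ t.isLt⟩)⟩ :
          MvPolynomial
            ((i : Fin d) × (Fin (r (i : ℕ)) × Fin (n ((i : ℕ) + 1)) ×
              Fin (r ((i : ℕ) + 1)))) ℝ)) := by
      funext x
      simp only [hqdef, Function.comp_apply, map_sum, map_prod, MvPolynomial.rename_X, hρ]
    rw [heq]
    exact hind
  have hle := aux_card_le q hq
  have hcard1 : Fintype.card {y // y ∈ S} = S.card := Fintype.card_coe S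
  have hcard2 : Fintype.card T = ∑ i : Fin d,
      r (i : ℕ) * r ((i : ℕ) + 1) * (S.image (fun x => x i)).card := by
    show Fintype.card ((i : Fin d) × (Fin (r (i : ℕ)) ×
      {v : Fin (n ((i : ℕ) + 1)) // v ∈ S.image (fun x => x i)} ×
      Fin (r ((i : ℕ) + 1)))) = _
    rw [Fintype.card_sigma]
    refine Finset.sum_congr rfl fun i _ => ?_
    rw [Fintype.card_prod, Fintype.card_prod, Fintype.card_fin, Fintype.card_fin,
      Fintype.card_coe]
    ring
  rw [hcard1, hcard2] at hle
  exact hle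
end
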